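/- Let G be a looped simple graph, v a vertex, and G' the graph obtained from G by complementing the loop status of v (i.e., adding 1 to the (v,v) entry of the adjacency matrix). Then the map on ground sets that swaps (v,χ) with (v,ψ) and fixes all other elements is an isomorphism from M(IAS(G)) to M(IAS(G')). -/

import Mathlib

/-- The three column types of the matrix `IAS(G) = (I | A | I+A)`. -/
inductive GType : Type
  | phi | chi | psi
  deriving DecidableEq

instance instFintypeGType : Fintype GType :=
  ⟨{GType.phi, GType.chi, GType.psi}, fun x => by cases x <;> simp⟩

/-- The column of `IAS(G) = (I | A(G) | I+A(G))` indexed by a ground set element of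
`W(G) = V × {φ, χ, ψ}`. -/
def iasCol {V : Type} [DecidableEq V] (A : Matrix V V (ZMod 2)) : V × GType → V → ZMod 2
  | (v, GType.phi) => fun w => if w = v then 1 else 0
  | (v, GType.chi) => fun w => A w v
  | (v, GType.psi) => fun w => (if w = v then 1 else 0) + A w v

/-- Independence in the binary matroid `M(IAS(G))`: a set of ground elements is independent
iff the corresponding columns of `IAS(G)` are linearly independent over `GF(2)`. -/
def IasIndep {V : Type} [DecidableEq V] (A : Matrix V V (ZMod 2))
    (S : Set (V × GType)) : Prop :=
  LinearIndependent (ZMod 2) (fun p : S => iasCol A p.1)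

lemma iasCol_swap {V : Type} [DecidableEq V] (A : Matrix V V (ZMod 2)) (v : V)
    (p : V × GType) :
    iasCol (A + Matrix.single v v 1)
      (Equiv.swap (v, GType.chi) (v, GType.psi) p) = iasCol A p := by
  obtain ⟨u, t⟩ := p
  by_cases hu : u = v
  · subst hu
    cases t with
    | phi =>
        rw [Equiv.swap_apply_of_ne_of_ne (by simp) (by simp)]
        rfl
    | chi =>
        rw [Equiv.swap_apply_left]
        funext w
        show (if w = u then 1 else 0) + ((A + Matrix.single u u 1 : Matrix V V (ZMod 2)) w u) = A w u
        rcases eq_or_ne w u with hw | hw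
        · subst hw
          simp only [Matrix.add_apply, Matrix.single_apply_same, if_true, ite_true]
          rw [show (1:ZMod 2) + (A w w + 1) = A w w + (1 + 1) by ring,
            show (1:ZMod 2) + 1 = 0 from rfl, add_zero]
        · simp [Matrix.single, Matrix.add_apply, hw, Ne.symm hw]
    | psi =>
        rw [Equiv.swap_apply_right]
        funext w
        show ((A + Matrix.single u u 1 : Matrix V V (ZMod 2)) w u) = (if w = u then 1 else 0) + A w u
        rcases eq_or_ne w u with hw | hw
        · subst hw
          simp [Matrix.single, Matrix.add_apply, add_comm]
        · simp [Matrix.single, Matrix.add_apply, hw, Ne.symm hw]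
  · have h1 : (u, t) ≠ (v, GType.chi) := by simp [hu]
    have h2 : (u, t) ≠ (v, GType.psi) := by simp [hu]
    rw [Equiv.swap_apply_of_ne_of_ne h1 h2]
    have hvu : v ≠ u := fun h => hu h.symm
    cases t with
    | phi => rfl
    | chi =>
        funext w
        show ((A + Matrix.single v v 1 : Matrix V V (ZMod 2)) w u) = A w u
        simp [Matrix.single, Matrix.add_apply, hvu]
    | psi =>
        funext w
        show (if w = u then 1 else 0) + ((A + Matrix.single v v 1 : Matrix V V (ZMod 2)) w u)
            = (if w = u then 1 else 0) + A w u
        simp [Matrix.single, Matrix.add_apply, hvu]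

/-- complementing the loop status of `v` yields an isomorphism of isotropic
matroids given by swapping `(v,χ)` with `(v,ψ)`. -/
theorem loop_complement_iso {V : Type} [Fintype V] [DecidableEq V]
    (A : Matrix V V (ZMod 2)) (hA : A.IsSymm) (v : V) :
    ∀ S : Set (V × GType),
      IasIndep A S ↔
        IasIndep (A + Matrix.single v v 1)
          ((Equiv.swap (v, GType.chi) (v, GType.psi)) '' S) := by
  intro S
  set e := Equiv.swap (v, GType.chi) (v, GType.psi)
  unfold IasIndep
  rw [← linearIndependent_equiv (Equiv.Set.image e S e.injective)
      (f := fun q : (e '' S : Set _) => iasCol (A + Matrix.single v v 1) q.1)]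
  have : ((fun q : (e '' S : Set _) => iasCol (A + Matrix.single v v 1) q.1) ∘
      (Equiv.Set.image e S e.injective)) = fun p : S => iasCol A p.1 := by
    funext p
    exact iasCol_swap A v p.1
  rw [this]
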